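/- arXiv:2311.10342 — 2 statements merged into one kernel-verified Lean document; each statement's English description precedes it below -/
import Mathlib

section
/- Let X be a sober topological space, i.e., X is T0 and quasi-sober. Then the unit of the adjunction between topological spaces and locales is an isomorphism at X: the map sending a point x ∈ X to the frame homomorphism Opens X → Prop, U ↦ (x ∈ U), is a homeomorphism from X onto the space of points of the frame of open sets of X, where the space of points of a frame L is the set of frame homomorphisms L → Prop topologized by the basic open sets { p | p a } for a ∈ L. -/
open CategoryTheory TopologicalSpace

namespace SoberUnitAux

variable {X : TopCat}

/-- The closed set associated to a point of the frame of opens. -/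
def S (p : Locale.PT (Opens X)) : Set X :=
  (↑(sSup {U : Opens X | ¬ p U}) : Set X)ᶜ

lemma not_p_sSup (p : Locale.PT (Opens X)) : ¬ p (sSup {U : Opens X | ¬ p U}) := by
  intro h
  rw [map_sSup] at h
  obtain ⟨q, ⟨U, hU, rfl⟩, hq⟩ := h
  exact hU hq

lemma nonempty_inter_iff (p : Locale.PT (Opens X)) (V : Opens X) :
    (S p ∩ ↑V).Nonempty ↔ p V := by
  constructor
  · rintro ⟨x, hxS, hxV⟩
    by_contra hV
    exact hxS (Opens.mem_sSup.2 ⟨V, hV, hxV⟩)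
  · intro hV
    by_contra h
    have hle : V ≤ sSup {U : Opens X | ¬ p U} := fun x hx => by
      by_contra hx'
      exact h ⟨x, hx', hx⟩
    exact not_p_sSup p (OrderHomClass.mono p hle hV)

lemma isIrreducible_S (p : Locale.PT (Opens X)) : IsIrreducible (S p) := by
  constructor
  · have := (nonempty_inter_iff p ⊤).2 (by simp)
    simpa using this
  · intro u v hu hv h1 h2
    have hu' : p ⟨u, hu⟩ := (nonempty_inter_iff p ⟨u, hu⟩).1 h1
    have hv' : p ⟨v, hv⟩ := (nonempty_inter_iff p ⟨v, hv⟩).1 h2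
    have : p (⟨u, hu⟩ ⊓ ⟨v, hv⟩) := by rw [map_inf]; exact ⟨hu', hv'⟩
    have := (nonempty_inter_iff p (⟨u, hu⟩ ⊓ ⟨v, hv⟩)).2 this
    simpa [Set.inter_assoc] using this

lemma isClosed_S (p : Locale.PT (Opens X)) : IsClosed (S p) :=
  (sSup {U : Opens X | ¬ p U}).2.isClosed_compl

variable [QuasiSober X]

/-- The inverse map: the generic point of the associated irreducible closed set. -/
noncomputable def invFun (p : Locale.PT (Opens X)) : X :=
  (isIrreducible_S p).genericPoint

lemma isGenericPoint_invFun (p : Locale.PT (Opens X)) :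
    IsGenericPoint (invFun p) (S p) :=
  (isIrreducible_S p).isGenericPoint_genericPoint (isClosed_S p)

lemma key (p : Locale.PT (Opens X)) (U : Opens X) : p U ↔ invFun p ∈ U := by
  have h := (isGenericPoint_invFun p).mem_open_set_iff U.2
  exact (h.trans (nonempty_inter_iff p U)).symm

lemma continuous_invFun : Continuous (invFun (X := X)) := by
  rw [continuous_def]
  intro s hs
  have : invFun ⁻¹' s = {p : Locale.PT (Opens X) | p ⟨s, hs⟩} := by
    ext p
    exact (key p ⟨s, hs⟩).symm
  rw [this]
  exact ⟨⟨s, hs⟩, rfl⟩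

lemma left_inv [T0Space X] (x : X) :
    invFun (Locale.localePointOfSpacePoint X x) = x := by
  have h : ∀ U : Opens X, invFun (Locale.localePointOfSpacePoint X x) ∈ U ↔ x ∈ U := fun U =>
    (key (Locale.localePointOfSpacePoint X x) U).symm
  have : Inseparable (invFun (Locale.localePointOfSpacePoint X x)) x := by
    rw [inseparable_iff_forall_isOpen]
    intro s hs
    exact h ⟨s, hs⟩
  exact this.eq

lemma right_inv (p : Locale.PT (Opens X)) :
    Locale.localePointOfSpacePoint X (invFun p) = p := by
  ext U
  exact (key p U).symm

end SoberUnitAux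

/-- For a sober topological space `X` (T0 and quasi-sober), the unit of the adjunction
between topological spaces and locales is an isomorphism at `X`: the map sending a point
`x` to the frame homomorphism `Opens X → Prop`, `U ↦ (x ∈ U)`, is a homeomorphism onto the
space of points of the frame of opens of `X`. -/
theorem sober_unit_is_iso (X : TopCat) [T0Space X] [QuasiSober X] :
    IsIso (Locale.adjunctionTopToLocalePT.unit.app X) ∧
    ∀ (x : X) (U : Opens X),
      ((show Locale.PT (Opens X) from (Locale.adjunctionTopToLocalePT.unit.app X) x) U
        ↔ x ∈ U) := by
  constructor
  · haveI : QuasiSober ((𝟭 TopCat).obj X) := ‹QuasiSober X›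
    haveI : T0Space ((𝟭 TopCat).obj X) := ‹T0Space X›
    refine ⟨⟨TopCat.ofHom ⟨SoberUnitAux.invFun, SoberUnitAux.continuous_invFun⟩, ?_, ?_⟩⟩
    · ext x
      show SoberUnitAux.invFun (Locale.localePointOfSpacePoint X x) = x
      exact SoberUnitAux.left_inv x
    · ext p
      show Locale.localePointOfSpacePoint ↑X (SoberUnitAux.invFun p) = p
      exact SoberUnitAux.right_inv p
  · intro x U
    exact Iff.rfl
end

section
/- Let υ be a nonempty type. The Karoubi envelope of the one-object category whose endomorphism monoid is the monoid of all functions υ → υ under composition is equivalent to the full subcategory of the category of types (sets) spanned by those types A that are nonempty and admit an injection A ↪ υ (equivalently, the nonempty retracts of υ). -/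
open CategoryTheory CategoryTheory.Idempotents

universe u

namespace KaroubiEndAux

variable (υ : Type u) [Nonempty υ]

/-- apply an endomorphism -/
def ap {x y : SingleObj (Function.End υ)} (f : x ⟶ y) : υ → υ := f

@[reducible]
def F : Karoubi (SingleObj (Function.End υ)) ⥤
    ObjectProperty.FullSubcategory (fun A : Type u => Nonempty A ∧ Nonempty (A ↪ υ)) where
  obj P := ⟨{a : υ // ap υ P.p a = a},
    ⟨⟨⟨ap υ P.p Classical.ofNonempty, (congrFun (congrArg (ap υ) P.idem) _ : _)⟩⟩,
     ⟨⟨Subtype.val, Subtype.val_injective⟩⟩⟩⟩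
  map {P Q} g := ObjectProperty.homMk (TypeCat.ofHom fun (a : {a : υ // ap υ P.p a = a}) => (⟨ap υ g.f a.1, by
    have h1 : ap υ g.f a.1 = ap υ Q.p (ap υ g.f (ap υ P.p a.1)) :=
      (congrFun (congrArg (ap υ) g.comm) a.1).symm
    have h2 := a.2
    calc ap υ Q.p (ap υ g.f a.1) = ap υ Q.p (ap υ Q.p (ap υ g.f (ap υ P.p a.1))) := by
          rw [← h1]
      _ = ap υ Q.p (ap υ g.f (ap υ P.p a.1)) :=
          congrFun (congrArg (ap υ) Q.idem) _
      _ = ap υ g.f a.1 := h1.symm⟩ : {a : υ // ap υ Q.p a = a}))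
  map_id P := by
    ext a
    exact a.2
  map_comp f g := rfl

instance : (F υ).Faithful := by
  constructor
  intro P Q g h hgh
  ext1
  funext y
  have key : ∀ (k : P ⟶ Q), ap υ k.f y = (((F υ).map k) ⟨ap υ P.p y,
      congrFun (congrArg (ap υ) P.idem) y⟩).1 := by
    intro k
    have h1 : ap υ k.f y = ap υ Q.p (ap υ k.f (ap υ P.p y)) :=
      (congrFun (congrArg (ap υ) k.comm) y).symm
    have h2 : (((F υ).map k) ⟨ap υ P.p y, congrFun (congrArg (ap υ) P.idem) y⟩).2 =
      (((F υ).map k) ⟨ap υ P.p y, congrFun (congrArg (ap υ) P.idem) y⟩).2 := rfl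
    -- the output is Q-fixed
    have h3 := (((F υ).map k) ⟨ap υ P.p y, congrFun (congrArg (ap υ) P.idem) y⟩).2
    exact h1.trans h3
  show ap υ g.f y = ap υ h.f y
  rw [key g, key h, hgh]

instance : (F υ).Full := by
  constructor
  intro P Q φ
  refine ⟨⟨(fun y => (φ ⟨ap υ P.p y, congrFun (congrArg (ap υ) P.idem) y⟩).1 : Function.End υ), ?_⟩, ?_⟩
  · show _ = (_ : Function.End υ)
    funext y
    show ap υ Q.p (φ ⟨ap υ P.p (ap υ P.p y), _⟩).1 = (φ _).1
    have hPP : ap υ P.p (ap υ P.p y) = ap υ P.p y := congrFun (congrArg (ap υ) P.idem) y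
    have : (⟨ap υ P.p (ap υ P.p y), congrFun (congrArg (ap υ) P.idem) _⟩ :
        {a : υ // ap υ P.p a = a}) = ⟨ap υ P.p y, congrFun (congrArg (ap υ) P.idem) y⟩ :=
      Subtype.ext hPP
    rw [this, (φ _).2]
  · ext a
    show (φ ⟨ap υ P.p a.1, congrFun (congrArg (ap υ) P.idem) a.1⟩).1 = (φ a).1
    exact congrArg (fun x => (φ x).1) (Subtype.ext a.2)

instance : (F υ).EssSurj := by
  constructor
  intro A
  obtain ⟨A, hne, ⟨i⟩⟩ := A
  have : Nonempty A := hne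
  let r : υ → A := Function.invFun i
  have hri : ∀ a, r (i a) = a := Function.leftInverse_invFun i.injective
  let e : Function.End υ := fun y => i (r y)
  have he : (e * e : Function.End υ) = e := by
    funext y
    show i (r (i (r y))) = i (r y)
    rw [hri]
  refine ⟨⟨SingleObj.star _, e, ?_⟩, ?_⟩
  · show (e * e : Function.End υ) = e
    exact he
  · -- iso in full subcategory between fixed points of e and A
    refine ⟨Iso.mk (ObjectProperty.homMk (TypeCat.ofHom fun x => r x.1)) (ObjectProperty.homMk (TypeCat.ofHom fun a => ⟨i a, by show i (r (i a)) = i a; rw [hri]⟩)) ?_ ?_⟩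
    · ext x
      show i (r x.1) = x.1
      exact x.2
    · ext a
      show r (i a) = a
      exact hri a

end KaroubiEndAux

/-- For a nonempty type `υ`, the Karoubi envelope of the one-object category on the monoid
`Function.End υ` of all functions `υ → υ` is equivalent to the full subcategory of the
category of types spanned by the nonempty types admitting an injection into `υ`
(equivalently, the nonempty retracts of `υ`). -/
theorem karoubi_singleObj_end_equiv_retracts (υ : Type u) [Nonempty υ] :
    Nonempty (Karoubi (SingleObj (Function.End υ)) ≌
      ObjectProperty.FullSubcategory (fun A : Type u => Nonempty A ∧ Nonempty (A ↪ υ))) := by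
  have : (KaroubiEndAux.F υ).IsEquivalence := {}
  exact ⟨(KaroubiEndAux.F υ).asEquivalence⟩
end
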